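/- Let γ be the Gauss measure on ℝⁿ, a > 0, β ∈ (0,1). There is a constant C such that for every f ∈ L^{1/β}(γ), ‖I_a^β(f)‖_{L¹(γ)} ≤ C ‖f‖_{L^{1/β}(γ)}, where I_a^β f(x) = ∫_{B(x, a·m(x))} f(y)/V(x,y)^{1-β} dγ(y). -/

import Mathlib

open MeasureTheory Metric Real ENNReal

/-- `m(x) = min{1, 1/|x|}`. -/
noncomputable def mfun {n : ℕ} (x : EuclideanSpace ℝ (Fin n)) : ℝ := min 1 ‖x‖⁻¹

/-- The Gauss measure `dγ(x) = π^{-n/2} e^{-|x|²} dx` on `ℝⁿ`. -/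
noncomputable def gauss (n : ℕ) : Measure (EuclideanSpace ℝ (Fin n)) :=
  volume.withDensity fun x => ENNReal.ofReal (Real.pi ^ (-(n : ℝ) / 2) * Real.exp (-‖x‖ ^ 2))

/-- The local fractional integral of `|f|`:
`I_a^β(|f|)(x) = ∫_{B(x, a m(x))} |f(y)| / V(x,y)^{1-β} dγ(y)`, with
`V(x,y) = γ(B(x,|x-y|))`. -/
noncomputable def fracInt (n : ℕ) (a β : ℝ) (f : EuclideanSpace ℝ (Fin n) → ℝ)
    (x : EuclideanSpace ℝ (Fin n)) : ℝ≥0∞ :=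
  ∫⁻ y in ball x (a * mfun x),
    ‖f y‖₊ * gauss n (ball x (dist x y)) ^ (β - 1) ∂gauss n

namespace Stmt13Aux

variable {n : ℕ}

/-- The density of the Gauss measure. -/
noncomputable def densE (n : ℕ) (x : EuclideanSpace ℝ (Fin n)) : ℝ≥0∞ :=
  ENNReal.ofReal (Real.pi ^ (-(n : ℝ) / 2) * Real.exp (-‖x‖ ^ 2))

lemma gauss_eq (n : ℕ) :
    gauss n = (volume : Measure (EuclideanSpace ℝ (Fin n))).withDensity (densE n) := rfl

lemma measurable_densE (n : ℕ) : Measurable (densE n) := by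
  unfold densE; fun_prop

lemma measurable_mfun : Measurable (mfun (n := n)) :=
  measurable_const.min measurable_norm.inv

lemma nontrivialE (hn : 0 < n) : Nontrivial (EuclideanSpace ℝ (Fin n)) := by
  haveI : Nonempty (Fin n) := ⟨⟨0, hn⟩⟩
  exact (WithLp.equiv 2 (∀ _ : Fin n, ℝ)).nontrivial

lemma mfun_mul_norm_le (x : EuclideanSpace ℝ (Fin n)) : mfun x * ‖x‖ ≤ 1 := by
  rcases eq_or_ne x 0 with h | h
  · simp [h, mfun]
  · calc mfun x * ‖x‖ ≤ ‖x‖⁻¹ * ‖x‖ :=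
        mul_le_mul_of_nonneg_right (min_le_right _ _) (norm_nonneg x)
    _ = 1 := inv_mul_cancel₀ (norm_ne_zero_iff.2 h)

lemma volume_ball_eq (hn : 0 < n) (x : EuclideanSpace ℝ (Fin n)) {r : ℝ} (hr : 0 ≤ r) :
    volume (ball x r)
      = ENNReal.ofReal (r ^ (n : ℝ)) * volume (ball (0 : EuclideanSpace ℝ (Fin n)) 1) := by
  haveI := nontrivialE hn
  rw [Measure.addHaar_ball volume x hr, finrank_euclideanSpace_fin, Real.rpow_natCast]

/-- Lower bound for the Gauss measure of small balls. -/
lemma gauss_ball_lower (hn : 0 < n) {a : ℝ} (x : EuclideanSpace ℝ (Fin n)) {r : ℝ}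
    (hr0 : 0 ≤ r) (hra : r ≤ a) (hrx : r * ‖x‖ ≤ a) :
    ENNReal.ofReal ((Real.pi ^ (-(n : ℝ) / 2) * Real.exp (-(2 * a + a ^ 2)) *
        (volume (ball (0 : EuclideanSpace ℝ (Fin n)) 1)).toReal)
        * Real.exp (-‖x‖ ^ 2) * r ^ (n : ℝ))
      ≤ gauss n (ball x r) := by
  have hd : (0:ℝ) < Real.pi ^ (-(n : ℝ) / 2) := Real.rpow_pos_of_pos Real.pi_pos _
  have hvb : volume (ball (0 : EuclideanSpace ℝ (Fin n)) 1)
      = ENNReal.ofReal (volume (ball (0 : EuclideanSpace ℝ (Fin n)) 1)).toReal :=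
    (ENNReal.ofReal_toReal measure_ball_lt_top.ne).symm
  have key : ∫⁻ z in ball x r,
      ENNReal.ofReal (Real.pi ^ (-(n : ℝ) / 2) * Real.exp (-(‖x‖ ^ 2 + (2 * a + a ^ 2))))
        ∂volume ≤ gauss n (ball x r) := by
    rw [gauss_eq, withDensity_apply _ measurableSet_ball]
    refine setLIntegral_mono' measurableSet_ball fun z hz => ?_
    refine ENNReal.ofReal_le_ofReal (mul_le_mul_of_nonneg_left ?_ hd.le)
    refine Real.exp_le_exp.2 ?_
    have hz' : dist z x < r := mem_ball.1 hz
    have h1 : ‖z‖ ≤ dist z x + ‖x‖ := by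
      have := dist_triangle z x 0
      simpa [dist_zero_right] using this
    have h2 : dist z x * ‖x‖ ≤ r * ‖x‖ := mul_le_mul_of_nonneg_right hz'.le (norm_nonneg x)
    have h3 : dist z x ≤ a := hz'.le.trans hra
    have h4 : (0:ℝ) ≤ dist z x := dist_nonneg
    nlinarith [norm_nonneg z, norm_nonneg x]
  refine le_trans ?_ key
  rw [setLIntegral_const, volume_ball_eq hn x hr0]
  have e : Real.exp (-(‖x‖ ^ 2 + (2 * a + a ^ 2)))
      = Real.exp (-(2 * a + a ^ 2)) * Real.exp (-‖x‖ ^ 2) := by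
    rw [← Real.exp_add]; congr 1; ring
  calc ENNReal.ofReal (Real.pi ^ (-(n : ℝ) / 2) * Real.exp (-(2 * a + a ^ 2)) *
        (volume (ball (0 : EuclideanSpace ℝ (Fin n)) 1)).toReal
        * Real.exp (-‖x‖ ^ 2) * r ^ (n : ℝ))
      = ENNReal.ofReal (Real.pi ^ (-(n : ℝ) / 2)
          * Real.exp (-(‖x‖ ^ 2 + (2 * a + a ^ 2))) * r ^ (n : ℝ))
        * ENNReal.ofReal (volume (ball (0 : EuclideanSpace ℝ (Fin n)) 1)).toReal := by
        rw [← ENNReal.ofReal_mul (by positivity)]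
        congr 1
        rw [e]; ring
    _ ≤ ENNReal.ofReal (Real.pi ^ (-(n : ℝ) / 2)
          * Real.exp (-(‖x‖ ^ 2 + (2 * a + a ^ 2))) * r ^ (n : ℝ))
        * volume (ball (0 : EuclideanSpace ℝ (Fin n)) 1) :=
        mul_le_mul_right ENNReal.ofReal_toReal_le _
    _ = ENNReal.ofReal (Real.pi ^ (-(n : ℝ) / 2) * Real.exp (-(‖x‖ ^ 2 + (2 * a + a ^ 2))))
        * (ENNReal.ofReal (r ^ (n : ℝ))
          * volume (ball (0 : EuclideanSpace ℝ (Fin n)) 1)) := by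
        rw [ENNReal.ofReal_mul (by positivity), mul_assoc]

lemma gauss_univ (n : ℕ) : gauss n Set.univ = 1 := by
  have hint : Integrable (fun v : EuclideanSpace ℝ (Fin n) => Real.exp (-‖v‖ ^ 2)) := by
    have h := (GaussianFourier.integrable_cexp_neg_mul_sq_norm_add
      (V := EuclideanSpace ℝ (Fin n)) (b := 1) (by norm_num) 0 0).norm
    refine h.congr (Filter.Eventually.of_forall fun v => ?_)
    simp [Complex.norm_exp, ← Complex.ofReal_pow]
  have hval : ∫ v : EuclideanSpace ℝ (Fin n), Real.exp (-‖v‖ ^ 2)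
      = Real.pi ^ ((n : ℝ) / 2) := by
    have h := GaussianFourier.integral_rexp_neg_mul_sq_norm
      (V := EuclideanSpace ℝ (Fin n)) (b := 1) one_pos
    simpa [finrank_euclideanSpace_fin] using h
  have hd : (0:ℝ) < Real.pi ^ (-(n : ℝ) / 2) := Real.rpow_pos_of_pos Real.pi_pos _
  rw [gauss_eq, withDensity_apply _ MeasurableSet.univ, Measure.restrict_univ]
  calc ∫⁻ x, densE n x ∂volume
      = ∫⁻ x, ENNReal.ofReal (Real.pi ^ (-(n : ℝ) / 2))
          * ENNReal.ofReal (Real.exp (-‖x‖ ^ 2)) ∂volume := by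
        refine lintegral_congr fun x => ?_
        rw [densE, ENNReal.ofReal_mul hd.le]
    _ = ENNReal.ofReal (Real.pi ^ (-(n : ℝ) / 2))
          * ∫⁻ x, ENNReal.ofReal (Real.exp (-‖x‖ ^ 2)) ∂volume :=
        lintegral_const_mul' _ _ ENNReal.ofReal_ne_top
    _ = ENNReal.ofReal (Real.pi ^ (-(n : ℝ) / 2)) * ENNReal.ofReal (Real.pi ^ ((n : ℝ) / 2)) := by
        rw [← ofReal_integral_eq_lintegral_ofReal hint
          (Filter.Eventually.of_forall fun v => (Real.exp_pos _).le), hval]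
    _ = 1 := by
        rw [← ENNReal.ofReal_mul hd.le, ← Real.rpow_add Real.pi_pos]
        have : -(n : ℝ) / 2 + (n : ℝ) / 2 = 0 := by ring
        rw [this, Real.rpow_zero, ENNReal.ofReal_one]

lemma gauss_prob (n : ℕ) : IsProbabilityMeasure (gauss n) := ⟨gauss_univ n⟩

/-- Finiteness of the singular integral `∫_{B(0,a)} |x|^q dx` for `-n < q ≤ 0`. -/
lemma singint_lt_top (hn : 0 < n) {a q : ℝ} (ha : 0 < a) (hq : q ≤ 0)
    (hnq : 0 < (n : ℝ) + q) :
    ∫⁻ x in ball (0 : EuclideanSpace ℝ (Fin n)) a, ENNReal.ofReal (‖x‖ ^ q) ∂volume < ⊤ := by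
  classical
  haveI := nontrivialE hn
  set A : ℕ → Set (EuclideanSpace ℝ (Fin n)) :=
    fun k => ball 0 (a / 2 ^ k) \ ball 0 (a / 2 ^ (k + 1)) with hA
  have hcover : ball (0 : EuclideanSpace ℝ (Fin n)) a ⊆ {0} ∪ ⋃ k, A k := by
    intro x hx
    rcases eq_or_ne x 0 with rfl | hx0
    · exact Set.mem_union_left _ rfl
    refine Set.mem_union_right _ ?_
    have hxa : ‖x‖ < a := mem_ball_zero_iff.1 hx
    have hx0' : 0 < ‖x‖ := norm_pos_iff.2 hx0
    have hex : ∃ k : ℕ, a / 2 ^ (k + 1) ≤ ‖x‖ := by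
      obtain ⟨k, hk⟩ := pow_unbounded_of_one_lt (a / ‖x‖) (one_lt_two (α := ℝ))
      refine ⟨k, ?_⟩
      rw [div_le_iff₀ (by positivity)]
      rw [div_lt_iff₀ hx0'] at hk
      have h2 : (2:ℝ) ^ k ≤ 2 ^ (k + 1) := by
        exact pow_le_pow_right₀ one_le_two (Nat.le_succ k)
      nlinarith
    set k0 := Nat.find hex with hk0
    refine Set.mem_iUnion.2 ⟨k0, ?_, ?_⟩
    · rw [mem_ball_zero_iff]
      rcases Nat.eq_zero_or_pos k0 with h0 | hpos
      · rw [h0]; simpa using hxa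
      · have hmin := Nat.find_min hex (m := k0 - 1) (by omega)
        rw [not_le] at hmin
        have : k0 - 1 + 1 = k0 := by omega
        rwa [this] at hmin
    · show ¬ _
      intro hmem
      exact absurd (mem_ball_zero_iff.1 hmem) (not_lt.2 (Nat.find_spec hex))
  have hmeasA : ∀ k, MeasurableSet (A k) :=
    fun k => measurableSet_ball.diff measurableSet_ball
  set vB := volume (ball (0 : EuclideanSpace ℝ (Fin n)) 1) with hvB
  set ρ : ℝ := (2⁻¹ : ℝ) ^ ((n : ℝ) + q) with hρ
  have hρ0 : 0 ≤ ρ := le_of_lt (Real.rpow_pos_of_pos (by norm_num) _)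
  have hρ1 : ρ < 1 := Real.rpow_lt_one (by norm_num) (by norm_num) hnq
  set c₀ : ℝ := (a / 2) ^ q * a ^ (n : ℝ) with hc₀
  have hc₀0 : 0 ≤ c₀ := by positivity
  have keyalg : ∀ k : ℕ, (a / 2 ^ (k + 1) : ℝ) ^ q * (a / 2 ^ k) ^ (n : ℝ) = c₀ * ρ ^ k := by
    intro k
    have e1 : (a / 2 ^ (k + 1) : ℝ) = (a / 2) * (2⁻¹) ^ k := by
      rw [pow_succ, div_eq_mul_inv, mul_inv, inv_pow]; ring
    have e2 : (a / 2 ^ k : ℝ) = a * (2⁻¹) ^ k := by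
      rw [div_eq_mul_inv, inv_pow]
    have hhalfpow : (0:ℝ) < (2⁻¹ : ℝ) ^ k := by positivity
    rw [e1, e2, Real.mul_rpow (by positivity) hhalfpow.le,
      Real.mul_rpow (by positivity) hhalfpow.le]
    have e3 : ((2⁻¹ : ℝ) ^ k) ^ q * ((2⁻¹ : ℝ) ^ k) ^ (n : ℝ) = ρ ^ k := by
      rw [← Real.rpow_natCast (2⁻¹ : ℝ) k, ← Real.rpow_mul (by norm_num),
        ← Real.rpow_mul (by norm_num), ← Real.rpow_add (by norm_num), hρ,
        ← Real.rpow_natCast ((2⁻¹ : ℝ) ^ ((n : ℝ) + q)) k, ← Real.rpow_mul (by norm_num)]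
      congr 1
      ring
    rw [← e3, hc₀]
    ring
  have hbnd : ∀ k : ℕ, ∫⁻ x in A k, ENNReal.ofReal (‖x‖ ^ q) ∂volume
      ≤ (ENNReal.ofReal c₀ * vB) * (ENNReal.ofReal ρ) ^ k := by
    intro k
    have step1 : ∫⁻ x in A k, ENNReal.ofReal (‖x‖ ^ q) ∂volume
        ≤ ENNReal.ofReal ((a / 2 ^ (k + 1)) ^ q) * volume (A k) := by
      rw [← setLIntegral_const (A k) (ENNReal.ofReal ((a / 2 ^ (k + 1)) ^ q))]
      refine setLIntegral_mono' (hmeasA k) fun x hx => ?_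
      refine ENNReal.ofReal_le_ofReal ?_
      have hxl : a / 2 ^ (k + 1) ≤ ‖x‖ := by
        have := hx.2
        rw [mem_ball_zero_iff, not_lt] at this
        exact this
      exact Real.rpow_le_rpow_of_nonpos (by positivity) hxl hq
    have step2 : volume (A k) ≤ ENNReal.ofReal ((a / 2 ^ k) ^ (n : ℝ)) * vB := by
      rw [hvB, ← volume_ball_eq hn 0 (by positivity)]
      exact measure_mono Set.diff_subset
    calc ∫⁻ x in A k, ENNReal.ofReal (‖x‖ ^ q) ∂volume
        ≤ ENNReal.ofReal ((a / 2 ^ (k + 1)) ^ q)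
          * (ENNReal.ofReal ((a / 2 ^ k) ^ (n : ℝ)) * vB) :=
          step1.trans (mul_le_mul_right step2 _)
      _ = ENNReal.ofReal ((a / 2 ^ (k + 1)) ^ q * (a / 2 ^ k) ^ (n : ℝ)) * vB := by
          rw [ENNReal.ofReal_mul (by positivity), mul_assoc]
      _ = (ENNReal.ofReal c₀ * vB) * (ENNReal.ofReal ρ) ^ k := by
          rw [keyalg k, ENNReal.ofReal_mul hc₀0, ENNReal.ofReal_pow hρ0]
          ring
  calc ∫⁻ x in ball (0 : EuclideanSpace ℝ (Fin n)) a, ENNReal.ofReal (‖x‖ ^ q) ∂volume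
      ≤ ∫⁻ x in {0} ∪ ⋃ k, A k, ENNReal.ofReal (‖x‖ ^ q) ∂volume :=
        lintegral_mono_set hcover
    _ ≤ (∫⁻ x in {(0 : EuclideanSpace ℝ (Fin n))}, ENNReal.ofReal (‖x‖ ^ q) ∂volume)
          + ∫⁻ x in ⋃ k, A k, ENNReal.ofReal (‖x‖ ^ q) ∂volume :=
        lintegral_union_le _ _ _
    _ ≤ 0 + ∑' k, ∫⁻ x in A k, ENNReal.ofReal (‖x‖ ^ q) ∂volume := by
        refine add_le_add ?_ (lintegral_iUnion_le _ _)
        rw [setLIntegral_measure_zero _ _ (measure_singleton _)]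
    _ ≤ 0 + ∑' k : ℕ, (ENNReal.ofReal c₀ * vB) * (ENNReal.ofReal ρ) ^ k := by
        exact add_le_add le_rfl (ENNReal.tsum_le_tsum hbnd)
    _ = (ENNReal.ofReal c₀ * vB) * (1 - ENNReal.ofReal ρ)⁻¹ := by
        rw [zero_add, ENNReal.tsum_mul_left, ENNReal.tsum_geometric]
    _ < ⊤ := by
        refine ENNReal.mul_lt_top (ENNReal.mul_lt_top ENNReal.ofReal_lt_top
          measure_ball_lt_top) ?_
        exact ENNReal.inv_lt_top.2 (tsub_pos_of_lt (ENNReal.ofReal_lt_one.2 hρ1))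

end Stmt13Aux

open Stmt13Aux

set_option maxHeartbeats 2000000 in
theorem stmt13 (n : ℕ) (a β : ℝ) (ha : 0 < a) (hβ : β ∈ Set.Ioo (0 : ℝ) 1) :
    ∃ C : ℝ, 0 < C ∧
      ∀ f : EuclideanSpace ℝ (Fin n) → ℝ,
        MemLp f (ENNReal.ofReal (1 / β)) (gauss n) →
        ∫⁻ x, fracInt n a β f x ∂gauss n ≤
          ENNReal.ofReal C * eLpNorm f (ENNReal.ofReal (1 / β)) (gauss n) := by
  obtain ⟨hβ0, hβ1⟩ := hβ
  rcases Nat.eq_zero_or_pos n with hn | hn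
  · subst hn
    refine ⟨1, one_pos, fun f hf => ?_⟩
    have hm : ∀ x : EuclideanSpace ℝ (Fin 0), mfun x = 0 := fun x => by
      simp [mfun, EuclideanSpace.norm_eq]
    have hz : ∀ x, fracInt 0 a β f x = 0 := fun x => by
      simp [fracInt, hm x]
    simp only [hz, lintegral_zero]
    exact zero_le
  -- main case `0 < n`
  haveI : IsProbabilityMeasure (gauss n) := gauss_prob n
  haveI : Nontrivial (EuclideanSpace ℝ (Fin n)) := nontrivialE hn
  set E := EuclideanSpace ℝ (Fin n) with hE
  set d : ℝ := Real.pi ^ (-(n : ℝ) / 2) with hd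
  have hd0 : 0 < d := Real.rpow_pos_of_pos Real.pi_pos _
  set vb : ℝ := (volume (ball (0 : E) 1)).toReal with hvb
  have hvb0 : 0 < vb := ENNReal.toReal_pos (measure_ball_pos _ _ one_pos).ne'
    measure_ball_lt_top.ne
  set c₁ : ℝ := d * Real.exp (-(2 * a + a ^ 2)) * vb with hc₁
  have hc₁0 : 0 < c₁ := by positivity
  set c₃ : ℝ := d * c₁ ^ (β - 1) with hc₃
  have hc₃0 : 0 < c₃ := by positivity
  set q : ℝ := (n : ℝ) * (β - 1) with hq
  have hq0 : q ≤ 0 := mul_nonpos_of_nonneg_of_nonpos (Nat.cast_nonneg n) (by linarith)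
  have hnq : 0 < (n : ℝ) + q := by
    have : (n : ℝ) + q = n * β := by rw [hq]; ring
    rw [this]
    have hn' : 0 < (n : ℝ) := Nat.cast_pos.2 hn
    positivity
  set SI : ℝ≥0∞ := ∫⁻ x in ball (0 : E) a, ENNReal.ofReal (‖x‖ ^ q) ∂volume with hSIdef
  have hSI : SI < ⊤ := singint_lt_top hn ha hq0 hnq
  set CK : ℝ≥0∞ := ENNReal.ofReal c₃ * SI with hCK
  have hCKt : CK ≠ ⊤ := (ENNReal.mul_lt_top ENNReal.ofReal_lt_top hSI).ne
  refine ⟨CK.toReal + 1, by positivity, fun f hf => ?_⟩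
  have hCKle : CK ≤ ENNReal.ofReal (CK.toReal + 1) := by
    conv_lhs => rw [← ENNReal.ofReal_toReal hCKt]
    exact ENNReal.ofReal_le_ofReal (by linarith)
  -- replace f by a measurable representative
  obtain ⟨fm, hfm_meas, hffm⟩ : ∃ g : E → ℝ, StronglyMeasurable g ∧ f =ᵐ[gauss n] g :=
    ⟨hf.1.mk f, hf.1.stronglyMeasurable_mk, hf.1.ae_eq_mk⟩
  have hfm : Measurable fm := hfm_meas.measurable
  -- the two-variable kernel
  set F : (E × E) × E → ℝ≥0∞ :=
    fun w => if dist w.2 w.1.1 < dist w.1.1 w.1.2 then densE n w.2 else 0 with hF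
  have hFmeas : Measurable F := by
    refine Measurable.ite ?_ ((measurable_densE n).comp measurable_snd) measurable_const
    exact measurableSet_lt (measurable_snd.dist (measurable_fst.fst))
      ((measurable_fst.fst).dist (measurable_fst.snd))
  set G : E × E → ℝ≥0∞ := fun p => ∫⁻ z, F (p, z) ∂volume with hGdef
  have hGmeas : Measurable G := hFmeas.lintegral_prod_right'
  have hG : ∀ x y : E, G (x, y) = gauss n (ball x (dist x y)) := by
    intro x y
    rw [gauss_eq, withDensity_apply _ measurableSet_ball, ← lintegral_indicator
      measurableSet_ball]
    refine lintegral_congr fun z => ?_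
    by_cases hz : dist z x < dist x y
    · simp only [hF]
      rw [if_pos hz, Set.indicator_of_mem (mem_ball.2 hz)]
    · simp only [hF]
      rw [if_neg hz, Set.indicator_of_notMem (fun hm => hz (mem_ball.1 hm))]
  set g : E × E → ℝ≥0∞ := fun p =>
    if dist p.2 p.1 < a * mfun p.1 then (‖fm p.2‖₊ : ℝ≥0∞) * G p ^ (β - 1) else 0 with hg
  have hgmeas : Measurable g := by
    refine Measurable.ite ?_ ?_ measurable_const
    · exact measurableSet_lt (measurable_snd.dist measurable_fst)
        (measurable_const.mul (measurable_mfun.comp measurable_fst))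
    · exact ((hfm.comp measurable_snd).nnnorm.coe_nnreal_ennreal).mul (hGmeas.pow_const _)
  -- rewrite fracInt
  have hfrac_congr : ∀ x, fracInt n a β f x = fracInt n a β fm x := by
    intro x
    refine lintegral_congr_ae ?_
    exact (ae_restrict_of_ae (hffm.mono fun y hy => by simp only [hy]))
  have step1 : ∀ x, fracInt n a β fm x = ∫⁻ y, g (x, y) ∂gauss n := by
    intro x
    rw [fracInt, ← lintegral_indicator measurableSet_ball]
    refine lintegral_congr fun y => ?_
    by_cases hy : dist y x < a * mfun x
    · rw [Set.indicator_of_mem (mem_ball.2 hy), hg]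
      simp only
      rw [if_pos hy, hG]
    · rw [Set.indicator_of_notMem (fun hm => hy (mem_ball.1 hm)), hg]
      simp only
      rw [if_neg hy]
  -- a.e. pointwise kernel bound (for the inner integral in x, fixed y)
  have keybound : ∀ y : E, ∫⁻ x, g (x, y) ∂gauss n ≤ (‖fm y‖₊ : ℝ≥0∞) * CK := by
    intro y
    have hmg : Measurable fun x => g (x, y) := hgmeas.comp measurable_prodMk_right
    rw [gauss_eq, lintegral_withDensity_eq_lintegral_mul volume (measurable_densE n) hmg]
    have hae : ∀ᵐ x ∂(volume : Measure E), x ≠ y := by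
      refine ae_iff.2 ?_
      have hset : {x : E | ¬ x ≠ y} = {y} := by ext z; simp
      rw [hset]
      exact measure_singleton y
    have hpt : ∀ x : E, x ≠ y →
        (densE n * fun x => g (x, y)) x ≤
          (ball y a).indicator
            (fun x => (‖fm y‖₊ : ℝ≥0∞) * ENNReal.ofReal (c₃ * dist x y ^ q)) x := by
      intro x hxy
      simp only [Pi.mul_apply, hg]
      by_cases h : dist y x < a * mfun x
      · rw [if_pos h]
        have hr0 : 0 < dist x y := dist_pos.2 hxy
        have hmx1 : mfun x ≤ 1 := min_le_left _ _
        have hra : dist x y ≤ a := by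
          rw [dist_comm]
          calc dist y x ≤ a * mfun x := h.le
            _ ≤ a * 1 := mul_le_mul_of_nonneg_left hmx1 ha.le
            _ = a := mul_one a
        have hmem : x ∈ ball y a := by
          rw [mem_ball]
          rw [dist_comm] at h
          calc dist x y < a * mfun x := h
            _ ≤ a * 1 := mul_le_mul_of_nonneg_left hmx1 ha.le
            _ = a := mul_one a
        have hrx : dist x y * ‖x‖ ≤ a := by
          rw [dist_comm] at h
          calc dist x y * ‖x‖ ≤ (a * mfun x) * ‖x‖ :=
              mul_le_mul_of_nonneg_right h.le (norm_nonneg x)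
            _ = a * (mfun x * ‖x‖) := by ring
            _ ≤ a * 1 := mul_le_mul_of_nonneg_left (mfun_mul_norm_le x) ha.le
            _ = a := mul_one a
        rw [Set.indicator_of_mem hmem]
        set r : ℝ := dist x y with hr
        set L : ℝ := c₁ * Real.exp (-‖x‖ ^ 2) * r ^ (n : ℝ) with hL
        have hL0 : 0 < L := by positivity
        have hGlow : ENNReal.ofReal L ≤ G (x, y) := by
          rw [hG]
          have := gauss_ball_lower (a := a) hn x hr0.le hra hrx
          refine le_trans (le_of_eq ?_) this
          rw [hL, hc₁, hd, hvb]
        have hGpow : G (x, y) ^ (β - 1) ≤ ENNReal.ofReal (L ^ (β - 1)) := by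
          rw [← ENNReal.ofReal_rpow_of_pos hL0]
          have e1 : G (x, y) ^ (β - 1) = (G (x, y) ^ (1 - β))⁻¹ := by
            rw [← ENNReal.rpow_neg]; congr 1; ring
          have e2 : (ENNReal.ofReal L) ^ (β - 1) = ((ENNReal.ofReal L) ^ (1 - β))⁻¹ := by
            rw [← ENNReal.rpow_neg]; congr 1; ring
          rw [e1, e2]
          exact ENNReal.inv_le_inv.2 (ENNReal.rpow_le_rpow hGlow (by linarith))
        have realkey : d * Real.exp (-‖x‖ ^ 2) * L ^ (β - 1) ≤ c₃ * r ^ q := by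
          have e1 : L ^ (β - 1) = c₁ ^ (β - 1) * Real.exp (-‖x‖ ^ 2) ^ (β - 1)
              * (r ^ (n : ℝ)) ^ (β - 1) := by
            rw [hL, Real.mul_rpow (by positivity) (by positivity),
              Real.mul_rpow (by positivity) (by positivity)]
          have e2 : (r ^ (n : ℝ)) ^ (β - 1) = r ^ q := by
            rw [← Real.rpow_mul hr0.le, hq]
          have e3 : Real.exp (-‖x‖ ^ 2) ^ (β - 1) = Real.exp (-‖x‖ ^ 2 * (β - 1)) :=
            (Real.exp_mul _ _).symm
          have e4 : Real.exp (-‖x‖ ^ 2) * Real.exp (-‖x‖ ^ 2 * (β - 1))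
              = Real.exp (-(β * ‖x‖ ^ 2)) := by
            rw [← Real.exp_add]; congr 1; ring
          calc d * Real.exp (-‖x‖ ^ 2) * L ^ (β - 1)
              = c₃ * (Real.exp (-‖x‖ ^ 2) * Real.exp (-‖x‖ ^ 2 * (β - 1))) * r ^ q := by
                rw [e1, e2, e3, hc₃]; ring
            _ = c₃ * Real.exp (-(β * ‖x‖ ^ 2)) * r ^ q := by rw [e4]
            _ ≤ c₃ * 1 * r ^ q := by
                have hexp : Real.exp (-(β * ‖x‖ ^ 2)) ≤ 1 :=
                  Real.exp_le_one_iff.2 (by nlinarith [sq_nonneg ‖x‖])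
                have hrq : (0:ℝ) ≤ r ^ q := Real.rpow_nonneg hr0.le _
                exact mul_le_mul_of_nonneg_right
                  (mul_le_mul_of_nonneg_left hexp hc₃0.le) hrq
            _ = c₃ * r ^ q := by ring
        calc densE n x * ((‖fm y‖₊ : ℝ≥0∞) * G (x, y) ^ (β - 1))
            ≤ densE n x * ((‖fm y‖₊ : ℝ≥0∞) * ENNReal.ofReal (L ^ (β - 1))) := by
              exact mul_le_mul_right (mul_le_mul_right hGpow _) _
          _ = (‖fm y‖₊ : ℝ≥0∞) * (ENNReal.ofReal (d * Real.exp (-‖x‖ ^ 2))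
                * ENNReal.ofReal (L ^ (β - 1))) := by
              rw [densE, ← hd]; ring
          _ = (‖fm y‖₊ : ℝ≥0∞) * ENNReal.ofReal (d * Real.exp (-‖x‖ ^ 2) * L ^ (β - 1)) := by
              rw [← ENNReal.ofReal_mul (by positivity)]
          _ ≤ (‖fm y‖₊ : ℝ≥0∞) * ENNReal.ofReal (c₃ * r ^ q) :=
              mul_le_mul_right (ENNReal.ofReal_le_ofReal realkey) _
      · rw [if_neg h, mul_zero]
        exact zero_le
    have hstep : ∫⁻ x, (densE n * fun x => g (x, y)) x ∂volume
        ≤ ∫⁻ x, (ball y a).indicator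
            (fun x => (‖fm y‖₊ : ℝ≥0∞) * ENNReal.ofReal (c₃ * dist x y ^ q)) x ∂volume :=
      lintegral_mono_ae (hae.mono fun x hxy => hpt x hxy)
    refine hstep.trans (le_of_eq ?_)
    rw [lintegral_indicator measurableSet_ball]
    rw [lintegral_const_mul' _ _ ENNReal.coe_ne_top]
    congr 1
    -- remaining: ∫⁻ x in ball y a, ofReal (c₃ * dist x y ^ q) = CK
    have hsplit : ∀ x : E, ENNReal.ofReal (c₃ * dist x y ^ q)
        = ENNReal.ofReal c₃ * ENNReal.ofReal (dist x y ^ q) := fun x =>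
      ENNReal.ofReal_mul hc₃0.le
    rw [lintegral_congr fun x => hsplit x, lintegral_const_mul' _ _ ENNReal.ofReal_ne_top,
      hCK]
    congr 1
    -- translation invariance
    have htrans : ∀ x : E, (ball y a).indicator
        (fun x => ENNReal.ofReal (dist x y ^ q)) x
        = (ball (0 : E) a).indicator (fun z => ENNReal.ofReal (‖z‖ ^ q)) (x + -y) := by
      intro x
      by_cases hx : x ∈ ball y a
      · rw [Set.indicator_of_mem hx, Set.indicator_of_mem
          (by rw [mem_ball_zero_iff, ← sub_eq_add_neg, ← dist_eq_norm]; exact mem_ball.1 hx)]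
        rw [← sub_eq_add_neg, ← dist_eq_norm]
      · rw [Set.indicator_of_notMem hx, Set.indicator_of_notMem (fun hmem => hx ?_)]
        rw [mem_ball_zero_iff, ← sub_eq_add_neg, ← dist_eq_norm] at hmem
        exact mem_ball.2 hmem
    rw [← lintegral_indicator measurableSet_ball, lintegral_congr htrans,
      lintegral_add_right_eq_self
        ((ball (0 : E) a).indicator (fun z => ENNReal.ofReal (‖z‖ ^ q))) (-y),
      lintegral_indicator measurableSet_ball, hSIdef]
  -- put everything together
  have hone_le : (1 : ℝ≥0∞) ≤ ENNReal.ofReal (1 / β) := by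
    rw [ENNReal.one_le_ofReal]
    rw [le_div_iff₀ hβ0]
    linarith
  calc ∫⁻ x, fracInt n a β f x ∂gauss n
      = ∫⁻ x, ∫⁻ y, g (x, y) ∂gauss n ∂gauss n := by
        refine lintegral_congr fun x => ?_
        rw [hfrac_congr x, step1 x]
    _ = ∫⁻ y, ∫⁻ x, g (x, y) ∂gauss n ∂gauss n :=
        lintegral_lintegral_swap hgmeas.aemeasurable
    _ ≤ ∫⁻ y, (‖fm y‖₊ : ℝ≥0∞) * CK ∂gauss n := lintegral_mono fun y => keybound y
    _ = (∫⁻ y, (‖fm y‖₊ : ℝ≥0∞) ∂gauss n) * CK := lintegral_mul_const' _ _ hCKt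
    _ = eLpNorm fm 1 (gauss n) * CK := by simp only [eLpNorm_one_eq_lintegral_enorm, enorm_eq_nnnorm]; rfl
    _ ≤ eLpNorm fm (ENNReal.ofReal (1 / β)) (gauss n) * CK :=
        mul_le_mul_left (eLpNorm_le_eLpNorm_of_exponent_le hone_le
          hfm.aestronglyMeasurable) _
    _ = eLpNorm f (ENNReal.ofReal (1 / β)) (gauss n) * CK := by
        rw [eLpNorm_congr_ae hffm]
    _ ≤ eLpNorm f (ENNReal.ofReal (1 / β)) (gauss n) * ENNReal.ofReal (CK.toReal + 1) :=
        mul_le_mul_right hCKle _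
    _ = ENNReal.ofReal (CK.toReal + 1) * eLpNorm f (ENNReal.ofReal (1 / β)) (gauss n) :=
        mul_comm _ _
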